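/- Assume the g-conjecture: g(n,m) = g(n+1,m) for all positive integers m, n with m ≥ 2 and n ≥ ⌈log₂ m⌉. Assume also the Bruhn–Schaudt bound: every union-closed family F of subsets of [n] with 2^{n-1} < |F| ≤ 2^n contains an element belonging to at least (6/13)·|F| of its sets. Then every union-closed family F of subsets of [n] (for any n, with 2 ≤ |F|) contains an element belonging to at least (6/13)·|F| of its sets; equivalently, g(n,m) ≥ (6/13)·m for all m ≥ 2 and n ≥ ⌈log₂ m⌉. -/

import Mathlib

/-- A family of sets is union-closed if it contains the union of any two of its sets. -/
def UnionClosed (F : Finset (Finset ℕ)) : Prop :=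
  ∀ S ∈ F, ∀ T ∈ F, S ∪ T ∈ F

/-- `F` is a family of subsets of `[n] = {0, …, n-1}` (modeled as `Finset.range n`). -/
def FamilyOn (n : ℕ) (F : Finset (Finset ℕ)) : Prop :=
  ∀ S ∈ F, S ⊆ Finset.range n

/-- The degree of an element `e`: the number of sets of `F` containing `e`. -/
def degOf (F : Finset (Finset ℕ)) (e : ℕ) : ℕ :=
  (F.filter (fun S => e ∈ S)).card

/-- `franklF n a` is the maximum cardinality of a nonempty union-closed family of subsets
of `[n]` in which every element of `[n]` belongs to at most `a` sets. -/
noncomputable def franklF (n a : ℕ) : ℕ :=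
  sSup {m | ∃ F : Finset (Finset ℕ), UnionClosed F ∧ FamilyOn n F ∧ F.Nonempty ∧
    (∀ e ∈ Finset.range n, degOf F e ≤ a) ∧ F.card = m}

/-- `franklG n m` is the minimum, over union-closed families of subsets of `[n]` with
exactly `m` sets, of the maximum degree `max_{e ∈ [n]} |{S ∈ F : e ∈ S}|`. -/
noncomputable def franklG (n m : ℕ) : ℕ :=
  sInf {a | ∃ F : Finset (Finset ℕ), UnionClosed F ∧ FamilyOn n F ∧ F.card = m ∧
    (Finset.range n).sup (degOf F) = a}

private lemma my_le_or (x y : ℕ) : x ≤ x ||| y := by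
  induction x using Nat.strongRecOn generalizing y with
  | ind x ih =>
    rcases Nat.eq_zero_or_pos x with h | h
    · simp [h]
    have h2 : x / 2 < x := Nat.div_lt_self h one_lt_two
    have ihd := ih (x / 2) h2 (y / 2)
    have hdiv : (x ||| y) / 2 = x / 2 ||| y / 2 := Nat.or_div_two
    have hmod : x % 2 ≤ (x ||| y) % 2 := by
      rcases Nat.mod_two_eq_zero_or_one x with h0 | h1
      · omega
      · have : (x ||| y) % 2 = 1 := Nat.or_mod_two_eq_one.mpr (Or.inl h1)
        omega
    have e1 : 2 * (x / 2) + x % 2 = x := Nat.div_add_mod x 2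
    have e2 : 2 * ((x ||| y) / 2) + (x ||| y) % 2 = x ||| y := Nat.div_add_mod _ 2
    omega

private lemma exists_uc (k m : ℕ) (hm : m ≤ 2 ^ k) :
    ∃ F : Finset (Finset ℕ), UnionClosed F ∧ FamilyOn k F ∧ F.card = m := by
  set f : ℕ → Finset ℕ := fun j => (Finset.range k).filter (fun i => j.testBit i) with hf
  have hmemf : ∀ j i, i ∈ f j ↔ i < k ∧ j.testBit i = true := by
    intro j i; simp [hf, Finset.mem_filter, Finset.mem_range]
  have hinj : ∀ j, j < 2 ^ k → ∀ j', j' < 2 ^ k → f j = f j' → j = j' := by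
    intro j hj j' hj' hff
    apply Nat.eq_of_testBit_eq
    intro i
    by_cases hik : i < k
    · have := (hmemf j i).symm.trans (hff ▸ hmemf j' i)
      by_cases h1 : j.testBit i = true
      · have := (this.mp ⟨hik, h1⟩).2; simp [h1, this]
      · by_cases h2 : j'.testBit i = true
        · exact absurd (this.mpr ⟨hik, h2⟩).2 h1
        · simp at h1 h2; rw [h1, h2]
    · have hk2 : (2 : ℕ) ^ k ≤ 2 ^ i := Nat.pow_le_pow_right (by norm_num) (by omega)
      rw [Nat.testBit_lt_two_pow (lt_of_lt_of_le hj hk2),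
        Nat.testBit_lt_two_pow (lt_of_lt_of_le hj' hk2)]
  refine ⟨(Finset.Ico (2 ^ k - m) (2 ^ k)).image f, ?_, ?_, ?_⟩
  · intro S hS T hT
    simp only [Finset.mem_image, Finset.mem_Ico] at hS hT ⊢
    obtain ⟨j, hj, rfl⟩ := hS
    obtain ⟨j', hj', rfl⟩ := hT
    refine ⟨j ||| j', ⟨le_trans hj.1 (my_le_or j j'), Nat.or_lt_two_pow hj.2 hj'.2⟩, ?_⟩
    ext i
    simp only [hmemf, Finset.mem_union, Nat.testBit_or, Bool.or_eq_true]
    tauto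
  · intro S hS
    simp only [Finset.mem_image] at hS
    obtain ⟨j, _, rfl⟩ := hS
    exact Finset.filter_subset _ _
  · rw [Finset.card_image_of_injOn, Nat.card_Ico]
    · omega
    · intro j hj j' hj' h
      simp only [Finset.mem_coe, Finset.mem_Ico] at hj hj'
      exact hinj j hj.2 j' hj'.2 h

/-- If the `g`-conjecture holds, then by the Bruhn–Schaudt bound, every union-closed
family `F` of subsets of `[n]` with at least two sets contains an element belonging to
at least `(6/13)·|F|` of its sets. -/
theorem franklG_six_thirteenths
    (gconj : ∀ m n : ℕ, 2 ≤ m → 0 < n → Nat.clog 2 m ≤ n →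
      franklG n m = franklG (n + 1) m)
    (BS : ∀ (n : ℕ) (F : Finset (Finset ℕ)), UnionClosed F → FamilyOn n F →
      2 ^ (n - 1) < F.card → F.card ≤ 2 ^ n →
      ∃ e ∈ Finset.range n, 6 * F.card ≤ 13 * degOf F e) :
    ∀ (n : ℕ) (F : Finset (Finset ℕ)), UnionClosed F → FamilyOn n F → 2 ≤ F.card →
      ∃ e ∈ Finset.range n, 6 * F.card ≤ 13 * degOf F e := by
  intro n F hUC hFam hcard
  set m := F.card with hm
  -- F is contained in the powerset of range n
  have hm2n : m ≤ 2 ^ n := by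
    have hsub : F ⊆ (Finset.range n).powerset := by
      intro S hS; exact Finset.mem_powerset.mpr (hFam S hS)
    calc m ≤ (Finset.range n).powerset.card := Finset.card_le_card hsub
      _ = 2 ^ n := by rw [Finset.card_powerset, Finset.card_range]
  have hn : 0 < n := by
    rcases Nat.eq_zero_or_pos n with h | h
    · subst h; simp at hm2n; omega
    · exact h
  set k := Nat.clog 2 m with hk
  have hk1 : 1 ≤ k := Nat.clog_pos one_lt_two hcard
  have hkn : k ≤ n := (Nat.clog_le_iff_le_pow one_lt_two).mpr hm2n
  have hlow : 2 ^ (k - 1) < m := Nat.pow_pred_clog_lt_self one_lt_two hcard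
  have hup : m ≤ 2 ^ k := Nat.le_pow_clog one_lt_two m
  -- lower bound for franklG k m from BS
  have hGk : 6 * m ≤ 13 * franklG k m := by
    have hne : {a | ∃ F : Finset (Finset ℕ), UnionClosed F ∧ FamilyOn k F ∧ F.card = m ∧
        (Finset.range k).sup (degOf F) = a}.Nonempty := by
      obtain ⟨F₀, h1, h2, h3⟩ := exists_uc k m hup
      exact ⟨_, F₀, h1, h2, h3, rfl⟩
    obtain ⟨F', hUC', hFam', hcard', hsup'⟩ := Nat.sInf_mem hne
    obtain ⟨e, he, hdeg⟩ := BS k F' hUC' hFam' (by omega) (by omega)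
    have hdle : degOf F' e ≤ franklG k m := by
      have h1 : degOf F' e ≤ (Finset.range k).sup (degOf F') := Finset.le_sup he
      rw [hsup'] at h1
      exact h1
    omega
  -- franklG is constant from k on
  have heq : franklG n m = franklG k m := by
    obtain ⟨d, rfl⟩ := Nat.exists_eq_add_of_le hkn
    clear hFam hkn hm2n hn
    induction d with
    | zero => rfl
    | succ d ih =>
      rw [show k + (d + 1) = (k + d) + 1 from rfl,
        ← gconj m (k + d) hcard (by omega) (by omega)]
      exact ih
  -- franklG n m is at most the max degree of F
  have hle : franklG n m ≤ (Finset.range n).sup (degOf F) :=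
    Nat.sInf_le ⟨F, hUC, hFam, rfl, rfl⟩
  obtain ⟨e, he, hsup⟩ := Finset.exists_mem_eq_sup (Finset.range n)
    (Finset.nonempty_range_iff.mpr (by omega)) (degOf F)
  refine ⟨e, he, ?_⟩
  have : (Finset.range n).sup (degOf F) = degOf F e := hsup
  omega
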